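/- arXiv:1312.1632 — 6 statements merged into one kernel-verified Lean document; each statement's English description precedes it below -/
import Mathlib

section
/- Let n ≥ 2, let L be a symmetric positive-semidefinite n×n real matrix with L·1 = 0 and kernel exactly the span of the all-ones vector 1, and let λ̲ > 0 denote its smallest nonzero eigenvalue. Let α > 0, σ ≥ 0, μ₀ ∈ ℝ, m₀ ∈ ℝ^n, and let S₀ be a symmetric positive-semidefinite n×n matrix. Define for t ≥ 0: μ_w(t) = exp(−(L+αI)t)·m₀ + (I − exp(−(L+αI)t))·μ₀·1 and Σ_w(t) = exp(−(L+αI)t)·S₀·exp(−(L+αI)t) + (σ²/2)·(L+αI)^{-1}·(I − exp(−2(L+αI)t)). Set C̃ = λ_max(S₀) − σ²/(2(λ̲+α)) + ‖m₀‖² and C̄ = (1/n²)·1ᵀS₀1 − σ²/(2αn) + ((1/n)·⟨1, m₀⟩ − μ₀)². Then for all t ≥ 0: (1/n)·( trace(Σ_w(t)) + ‖μ_w(t) − μ₀·1‖² ) ≤ C̃·e^{−2(λ̲+α)t} + C̄·e^{−2αt} + (σ²/2)·( 1/(λ̲+α) + 1/(αn) ). -/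
open Matrix

namespace NetAux

lemma exp_ratio_mono {x y : ℝ} (hx : 0 ≤ x) (hxy : x ≤ y) :
    x * (1 - Real.exp (-y)) ≤ y * (1 - Real.exp (-x)) := by
  rcases eq_or_lt_of_le (hx.trans hxy) with h0 | hy
  · have hx0 : x = 0 := le_antisymm (hxy.trans h0.symm.le) hx
    simp [hx0, ← h0]
  · have hxyq : x / y ≤ 1 := div_le_one_of_le₀ hxy hy.le
    have h1 := convexOn_exp.2 (Set.mem_univ (-y)) (Set.mem_univ (0:ℝ))
      (div_nonneg hx hy.le) (by linarith : (0:ℝ) ≤ 1 - x / y) (by ring)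
    rw [smul_eq_mul, smul_eq_mul, smul_eq_mul, Real.exp_zero] at h1
    have hcombo : x / y * -y + (1 - x / y) * 0 = -x := by field_simp; ring
    rw [hcombo] at h1
    have h2 : y * Real.exp (-x) ≤ x * Real.exp (-y) + (y - x) := by
      have h3 := mul_le_mul_of_nonneg_left h1 hy.le
      calc y * Real.exp (-x) ≤ y * (x / y * Real.exp (-y) + (1 - x / y) * 1) := h3
        _ = x * Real.exp (-y) + (y - x) := by field_simp
    linarith

lemma inv_one_sub_exp_mono {a b t : ℝ} (ha : 0 < a) (hab : a ≤ b) (ht : 0 ≤ t) :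
    b⁻¹ * (1 - Real.exp (-(2 * t) * b)) ≤ a⁻¹ * (1 - Real.exp (-(2 * t) * a)) := by
  have hb : 0 < b := ha.trans_le hab
  rcases eq_or_lt_of_le ht with h0 | ht'
  · simp [← h0]
  · have h := exp_ratio_mono (x := 2 * t * a) (y := 2 * t * b)
      (by positivity) (by nlinarith)
    have hxa : -(2 * t * a) = -(2 * t) * a := by ring
    have hxb : -(2 * t * b) = -(2 * t) * b := by ring
    rw [hxa, hxb] at h
    rw [inv_mul_eq_div, inv_mul_eq_div, div_le_div_iff₀ hb ha]
    nlinarith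

variable {n : ℕ} (U : Matrix (Fin n) (Fin n) ℝ)

lemma star_eq_trans : star U = Uᵀ := by
  rw [star_eq_conjTranspose, conjTranspose_eq_transpose_of_trivial]

lemma conj_mul (hU1 : star U * U = 1) (f g : Fin n → ℝ) :
    (U * diagonal f * star U) * (U * diagonal g * star U)
      = U * diagonal (fun i => f i * g i) * star U := by
  have h : (U * diagonal f * star U) * (U * diagonal g * star U)
      = U * (diagonal f * ((star U * U) * (diagonal g * star U))) := by
    simp only [mul_assoc]
  rw [h, hU1, one_mul, ← diagonal_mul_diagonal]
  simp only [mul_assoc]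

lemma trace_conj (hU1 : star U * U = 1) (B : Matrix (Fin n) (Fin n) ℝ) :
    (U * B * star U).trace = B.trace := by
  rw [trace_mul_comm (U * B) (star U), ← mul_assoc, hU1, one_mul]

lemma trace_diag_sandwich (f g : Fin n → ℝ) (B : Matrix (Fin n) (Fin n) ℝ) :
    (diagonal f * B * diagonal g).trace = ∑ i, f i * B i i * g i := by
  simp [Matrix.trace, Matrix.diag, mul_diagonal, diagonal_mul]

lemma trace_sandwich (hU1 : star U * U = 1) (f g : Fin n → ℝ)
    (S : Matrix (Fin n) (Fin n) ℝ) :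
    ((U * diagonal f * star U) * S * (U * diagonal g * star U)).trace
      = ∑ i, f i * (star U * S * U) i i * g i := by
  have h : (U * diagonal f * star U) * S * (U * diagonal g * star U)
      = U * (diagonal f * (star U * S * U) * diagonal g) * star U := by
    simp only [mul_assoc]
  rw [h, trace_conj U hU1, trace_diag_sandwich]

lemma mulVec_unitary_dot (hU1 : star U * U = 1) (z z' : Fin n → ℝ) :
    (U *ᵥ z) ⬝ᵥ (U *ᵥ z') = z ⬝ᵥ z' := by
  rw [dotProduct_mulVec, ← mulVec_transpose, ← star_eq_trans, mulVec_mulVec, hU1, one_mulVec]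

lemma dot_conj_self (hU1 : star U * U = 1) (f : Fin n → ℝ) (v : Fin n → ℝ) :
    ((U * diagonal f * star U) *ᵥ v) ⬝ᵥ ((U * diagonal f * star U) *ᵥ v)
      = ∑ i, (f i) ^ 2 * ((star U *ᵥ v) i) ^ 2 := by
  rw [← mulVec_mulVec, ← mulVec_mulVec, mulVec_unitary_dot U hU1]
  simp only [dotProduct, mulVec_diagonal]
  exact Finset.sum_congr rfl fun i _ => by ring

lemma dot_conj (f : Fin n → ℝ) (v : Fin n → ℝ) :
    v ⬝ᵥ ((U * diagonal f * star U) *ᵥ v) = ∑ i, f i * ((star U *ᵥ v) i) ^ 2 := by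
  rw [← mulVec_mulVec, ← mulVec_mulVec, dotProduct_mulVec, ← mulVec_transpose, ← star_eq_trans]
  simp only [dotProduct, mulVec_diagonal]
  exact Finset.sum_congr rfl fun i _ => by ring

lemma dot_norm_preserve (hU2 : U * star U = 1) (v : Fin n → ℝ) :
    ∑ i, ((star U *ᵥ v) i) ^ 2 = v ⬝ᵥ v := by
  have h : (star U *ᵥ v) ⬝ᵥ (star U *ᵥ v) = v ⬝ᵥ v := by
    rw [dotProduct_mulVec, ← mulVec_transpose, ← star_eq_trans, star_star, mulVec_mulVec,
      hU2, one_mulVec]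
  rw [← h]
  simp only [dotProduct]
  exact Finset.sum_congr rfl fun i _ => by ring

lemma spectral_data (S : Matrix (Fin n) (Fin n) ℝ) (hS : S.IsHermitian) :
    ∃ U d : _, star U * U = 1 ∧ U * star U = 1 ∧ S = U * Matrix.diagonal d * star U ∧
      d = hS.eigenvalues := by
  refine ⟨(hS.eigenvectorUnitary : Matrix (Fin n) (Fin n) ℝ), hS.eigenvalues, ?_, ?_, ?_, rfl⟩
  · exact (Unitary.mem_iff.mp hS.eigenvectorUnitary.2).1
  · exact (Unitary.mem_iff.mp hS.eigenvectorUnitary.2).2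
  · have h := hS.spectral_theorem
    have h2 : (RCLike.ofReal ∘ hS.eigenvalues : Fin n → ℝ) = hS.eigenvalues := by
      funext i; simp
    rwa [h2] at h

lemma quadform_le (S : Matrix (Fin n) (Fin n) ℝ) (hS : S.PosSemidef) (lmax : ℝ)
    (hlmax : ∀ (c : ℝ) (v : Fin n → ℝ), v ≠ 0 → S *ᵥ v = c • v → c ≤ lmax)
    (v : Fin n → ℝ) : v ⬝ᵥ (S *ᵥ v) ≤ lmax * (v ⬝ᵥ v) := by
  obtain ⟨U, d, hU1, hU2, hspec, -⟩ := spectral_data S hS.1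
  have hcol : ∀ i, S *ᵥ (fun j => U j i) = d i • (fun j => U j i) := by
    intro i
    have hSU : S * U = U * diagonal d := by
      rw [hspec, mul_assoc (U * diagonal d) (star U) U, hU1, mul_one]
    funext j
    have h : (S * U) j i = (U * diagonal d) j i := by rw [hSU]
    rw [mul_diagonal] at h
    simpa [mulVec, dotProduct, Matrix.mul_apply, mul_comm] using h
  have hune : ∀ i, (fun j => U j i) ≠ (0 : Fin n → ℝ) := by
    intro i h
    have h1 : (star U * U) i i = (1 : Matrix (Fin n) (Fin n) ℝ) i i := by rw [hU1]
    rw [Matrix.one_apply_eq] at h1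
    have : ∀ k, U k i = 0 := fun k => congrFun h k
    simp [Matrix.mul_apply, Matrix.star_apply, this] at h1
  have hd : ∀ i, d i ≤ lmax := fun i => hlmax (d i) _ (hune i) (hcol i)
  rw [hspec, dot_conj U, ← dot_norm_preserve U hU2 v, Finset.mul_sum]
  refine Finset.sum_le_sum fun i _ => ?_
  have := sq_nonneg ((star U *ᵥ v) i)
  nlinarith [hd i]

end NetAux

set_option maxHeartbeats 2000000 in
/-- Convergence bound for the coupled regularized learning network (Theorem 2 of the paper,
deterministic core): the mean-squared error `(1/n)(trace Σ_w(t) + ‖μ_w(t) − μ₀·1‖²)` of the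
Gaussian solution of `dw = (L+αI)(μ₀·1 − w)dt + σ dB` is bounded by two exponentially decaying
transients plus a steady-state variance term. -/
theorem network_convergence_bound
    (n : ℕ) (hn : 2 ≤ n) (L S₀ : Matrix (Fin n) (Fin n) ℝ)
    (hLsym : L.IsSymm) (hLpsd : L.PosSemidef)
    (hL1 : L *ᵥ (fun _ => (1 : ℝ)) = 0)
    (hker : ∀ v : Fin n → ℝ, L *ᵥ v = 0 → ∃ c : ℝ, v = fun _ => c)
    (lam : ℝ) (hlam : 0 < lam)
    (hlam_eig : ∃ v : Fin n → ℝ, v ≠ 0 ∧ L *ᵥ v = lam • v)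
    (hlam_min : ∀ c : ℝ, (∃ v : Fin n → ℝ, v ≠ 0 ∧ L *ᵥ v = c • v) → c = 0 ∨ lam ≤ c)
    (α σ μ₀ : ℝ) (hα : 0 < α) (hσ : 0 ≤ σ) (m₀ : Fin n → ℝ)
    (hS₀sym : S₀.IsSymm) (hS₀ : S₀.PosSemidef)
    (lmax : ℝ) (hlmax_eig : ∃ v : Fin n → ℝ, v ≠ 0 ∧ S₀ *ᵥ v = lmax • v)
    (hlmax : ∀ (c : ℝ) (v : Fin n → ℝ), v ≠ 0 → S₀ *ᵥ v = c • v → c ≤ lmax)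
    (μw : ℝ → Fin n → ℝ) (Sw : ℝ → Matrix (Fin n) (Fin n) ℝ)
    (hμw : ∀ t : ℝ, μw t = NormedSpace.exp ((-t) • (L + α • 1)) *ᵥ m₀
        + (1 - NormedSpace.exp ((-t) • (L + α • 1))) *ᵥ (fun _ => μ₀))
    (hSw : ∀ t : ℝ, Sw t
        = NormedSpace.exp ((-t) • (L + α • 1)) * S₀ * NormedSpace.exp ((-t) • (L + α • 1))
          + (σ ^ 2 / 2) • ((L + α • 1)⁻¹
              * (1 - NormedSpace.exp ((-(2 * t)) • (L + α • 1)))))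
    (Ct Cb : ℝ)
    (hCt : Ct = lmax - σ ^ 2 / (2 * (lam + α)) + ∑ i, (m₀ i) ^ 2)
    (hCb : Cb = (1 / (n : ℝ) ^ 2) * ((fun _ => (1 : ℝ)) ⬝ᵥ (S₀ *ᵥ fun _ => (1 : ℝ)))
        - σ ^ 2 / (2 * α * n) + ((1 / (n : ℝ)) * (∑ i, m₀ i) - μ₀) ^ 2) :
    ∀ t : ℝ, 0 ≤ t →
      (1 / (n : ℝ)) * ((Sw t).trace + ∑ i, (μw t i - μ₀) ^ 2)
        ≤ Ct * Real.exp (-2 * (lam + α) * t) + Cb * Real.exp (-2 * α * t)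
          + σ ^ 2 / 2 * (1 / (lam + α) + 1 / (α * n)) := by
  classical
  intro t ht
  have hnpos : 0 < n := by omega
  have hnR : (0:ℝ) < n := Nat.cast_pos.mpr hnpos
  have hL : L.IsHermitian := hLpsd.1
  obtain ⟨U, d, hU1, hU2, hspec, hdeq⟩ := NetAux.spectral_data L hL
  have hd0 : ∀ i, 0 ≤ d i := by rw [hdeq]; exact hLpsd.eigenvalues_nonneg
  set one : Fin n → ℝ := fun _ => 1 with hone
  set u : Fin n → Fin n → ℝ := fun i j => U j i with hu
  -- orthonormality of columns
  have horth : ∀ i j, u i ⬝ᵥ u j = if i = j then (1:ℝ) else 0 := by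
    intro i j
    have h : (star U * U) i j = (1 : Matrix (Fin n) (Fin n) ℝ) i j := by rw [hU1]
    simpa [Matrix.mul_apply, Matrix.star_apply, Matrix.one_apply, dotProduct, u] using h
  have hune : ∀ i, u i ≠ 0 := by
    intro i h
    have := horth i i
    rw [h, if_pos rfl] at this
    simp [dotProduct] at this
  have hLu : ∀ i, L *ᵥ u i = d i • u i := by
    intro i
    have hSU : L * U = U * diagonal d := by
      rw [hspec, mul_assoc (U * diagonal d) (star U) U, hU1, mul_one]
    funext j
    have h : (L * U) j i = (U * diagonal d) j i := by rw [hSU]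
    rw [mul_diagonal] at h
    simpa [mulVec, dotProduct, Matrix.mul_apply, mul_comm, u] using h
  have hdich : ∀ i, d i = 0 ∨ lam ≤ d i := fun i => hlam_min (d i) ⟨u i, hune i, hLu i⟩
  set w : Fin n → ℝ := star U *ᵥ one with hw
  have hwent : ∀ i, w i = u i ⬝ᵥ one := by
    intro i
    simp [w, mulVec, dotProduct, Matrix.star_apply, u]
  have hdw : ∀ i, d i * w i = 0 := by
    intro i
    have h1 : u i ⬝ᵥ (L *ᵥ one) = 0 := by rw [hL1]; simp
    have h2 : u i ⬝ᵥ (L *ᵥ one) = d i * w i := by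
      rw [dotProduct_mulVec, ← mulVec_transpose, hLsym, hLu i, smul_dotProduct, hwent i,
        smul_eq_mul]
    rw [h2] at h1; exact h1
  have hwne : ∃ i, w i ≠ 0 := by
    by_contra h
    push_neg at h
    have hw0 : w = 0 := funext h
    have hone' : one = U *ᵥ w := by
      rw [hw, mulVec_mulVec, hU2, one_mulVec]
    rw [hw0, mulVec_zero] at hone'
    have := congrFun hone' ⟨0, hnpos⟩
    simp [one] at this
  obtain ⟨i₀, hwi₀⟩ := hwne
  have hdi₀ : d i₀ = 0 := by
    rcases mul_eq_zero.mp (hdw i₀) with h | h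
    · exact h
    · exact absurd h hwi₀
  obtain ⟨c, hc⟩ : ∃ c : ℝ, u i₀ = fun _ => c := by
    apply hker
    rw [hLu i₀, hdi₀, zero_smul]
  have hc2 : (n : ℝ) * c ^ 2 = 1 := by
    have := horth i₀ i₀
    rw [if_pos rfl, hc] at this
    simpa [dotProduct, Finset.sum_const, pow_two, mul_comm] using this
  have hcne : c ≠ 0 := by
    intro h
    rw [h] at hc2; simp at hc2
  have hc2' : c ^ 2 = 1 / n := by field_simp; linarith [hc2]
  have hw0' : ∀ i, i ≠ i₀ → w i = 0 := by
    intro i hi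
    have := horth i i₀
    rw [if_neg hi, hc] at this
    have h2 : u i ⬝ᵥ (fun _ => c) = c * w i := by
      rw [hwent i]
      simp [dotProduct, one, Finset.mul_sum, mul_comm]
    rw [h2] at this
    exact (mul_eq_zero.mp this).resolve_left hcne
  have hdlam : ∀ i, i ≠ i₀ → lam ≤ d i := by
    intro i hi
    rcases hdich i with h | h
    · exfalso
      obtain ⟨c', hc'⟩ : ∃ c' : ℝ, u i = fun _ => c' := by
        apply hker; rw [hLu i, h, zero_smul]
      have hwi : w i = n * c' := by
        rw [hwent i, hc']
        simp [dotProduct, one, Finset.sum_const, mul_comm]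
      rw [hw0' i hi] at hwi
      have hc'0 : c' = 0 := by
        rcases mul_eq_zero.mp hwi.symm with h' | h'
        · exact absurd h' (Nat.cast_ne_zero.mpr hnpos.ne')
        · exact h'
      exact hune i (by rw [hc', hc'0]; rfl)
    · exact h
  -- matrix function formulas
  have hconj := NetAux.conj_mul U hU1
  have hA : L + α • (1 : Matrix (Fin n) (Fin n) ℝ)
      = U * diagonal (fun i => d i + α) * star U := by
    have h1 : (diagonal fun i => d i + α)
        = diagonal d + α • (1 : Matrix (Fin n) (Fin n) ℝ) := by
      rw [smul_one_eq_diagonal, ← diagonal_add]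
    rw [h1, Matrix.mul_add, Matrix.add_mul, ← hspec]
    congr 1
    rw [mul_smul_comm, smul_mul_assoc, mul_one, hU2]
  have hexp : ∀ s : ℝ, NormedSpace.exp (s • (L + α • (1 : Matrix (Fin n) (Fin n) ℝ)))
      = U * diagonal (fun i => Real.exp (s * (d i + α))) * star U := by
    intro s
    have hds : (diagonal fun i => s * (d i + α))
        = s • diagonal (fun i => d i + α) := by
      rw [← diagonal_smul]
      congr 1
    have h1 : s • (L + α • (1 : Matrix (Fin n) (Fin n) ℝ))
        = U * diagonal (fun i => s * (d i + α)) * star U := by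
      rw [hA, hds, mul_smul_comm, smul_mul_assoc]
    rw [h1]
    have h2 : NormedSpace.exp (U * diagonal (fun i => s * (d i + α)) * star U)
        = U * NormedSpace.exp (diagonal fun i => s * (d i + α)) * star U :=
      Matrix.exp_units_conj (⟨U, star U, hU2, hU1⟩ : (Matrix (Fin n) (Fin n) ℝ)ˣ) _
    rw [h2, Matrix.exp_diagonal]
    congr 2
    rw [Pi.exp_def, Real.exp_eq_exp_ℝ]
  have hdαpos : ∀ i, 0 < d i + α := fun i => by have := hd0 i; linarith
  have hinv : (L + α • (1 : Matrix (Fin n) (Fin n) ℝ))⁻¹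
      = U * diagonal (fun i => (d i + α)⁻¹) * star U := by
    apply Matrix.inv_eq_right_inv
    rw [hA, hconj]
    have h : (fun i => (d i + α) * (d i + α)⁻¹) = fun _ : Fin n => (1:ℝ) := by
      funext i; exact mul_inv_cancel₀ (hdαpos i).ne'
    rw [h, diagonal_one, mul_one, hU2]
  -- exponential abbreviations
  set g : Fin n → ℝ := fun i => Real.exp ((-t) * (d i + α)) with hg
  set G : Fin n → ℝ := fun i => Real.exp ((-(2*t)) * (d i + α)) with hG
  have hgg : ∀ i, g i * g i = G i := by
    intro i
    rw [hg, hG, ← Real.exp_add]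
    congr 1
    ring
  have hE : NormedSpace.exp ((-t) • (L + α • (1 : Matrix (Fin n) (Fin n) ℝ)))
      = U * diagonal g * star U := hexp (-t)
  have hE2 : NormedSpace.exp ((-(2*t)) • (L + α • (1 : Matrix (Fin n) (Fin n) ℝ)))
      = U * diagonal G * star U := hexp (-(2*t))
  set M : Fin n → ℝ := fun i => (star U * S₀ * U) i i with hMdef
  -- trace of the covariance
  have htr1 : (NormedSpace.exp ((-t) • (L + α • (1 : Matrix (Fin n) (Fin n) ℝ))) * S₀ *
      NormedSpace.exp ((-t) • (L + α • (1 : Matrix (Fin n) (Fin n) ℝ)))).trace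
      = ∑ i, G i * M i := by
    rw [hE, NetAux.trace_sandwich U hU1]
    exact Finset.sum_congr rfl fun i _ => by rw [← hgg i]; ring
  have hsub : (1 : Matrix (Fin n) (Fin n) ℝ) - U * diagonal G * star U
      = U * diagonal (fun i => 1 - G i) * star U := by
    have h1 : (1 : Matrix (Fin n) (Fin n) ℝ) = U * diagonal (fun _ : Fin n => (1:ℝ)) * star U := by
      rw [diagonal_one, mul_one, hU2]
    conv_lhs => rw [h1]
    rw [← Matrix.sub_mul, ← Matrix.mul_sub, diagonal_sub]
  have htr2 : ((L + α • (1 : Matrix (Fin n) (Fin n) ℝ))⁻¹ *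
      ((1 : Matrix (Fin n) (Fin n) ℝ) -
        NormedSpace.exp ((-(2*t)) • (L + α • (1 : Matrix (Fin n) (Fin n) ℝ))))).trace
      = ∑ i, (d i + α)⁻¹ * (1 - G i) := by
    rw [hE2, hsub, hinv, hconj, NetAux.trace_conj U hU1, trace_diagonal]
  have htrSw : (Sw t).trace
      = ∑ i, (G i * M i + σ^2/2 * ((d i + α)⁻¹ * (1 - G i))) := by
    rw [hSw t, trace_add, trace_smul, htr1, htr2, smul_eq_mul, Finset.mul_sum,
      ← Finset.sum_add_distrib]
  -- the mean part
  set vv : Fin n → ℝ := fun j => m₀ j - μ₀ with hvv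
  set cm : Fin n → ℝ := star U *ᵥ vv with hcm
  have hmean : (fun i => μw t i - μ₀) = (U * diagonal g * star U) *ᵥ vv := by
    funext i
    rw [hμw t]
    have h2 : vv = m₀ - (fun _ => μ₀) := by funext j; simp [hvv]
    rw [h2, mulVec_sub, hE]
    simp only [Pi.add_apply, sub_mulVec, one_mulVec, Pi.sub_apply]
    ring
  have hsumsq : ∑ i, (μw t i - μ₀)^2 = ∑ i, G i * (cm i)^2 := by
    have h1 : ∑ i, (μw t i - μ₀)^2
        = ((U * diagonal g * star U) *ᵥ vv) ⬝ᵥ ((U * diagonal g * star U) *ᵥ vv) := by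
      rw [← hmean]
      simp only [dotProduct]
      exact Finset.sum_congr rfl fun i _ => by ring
    rw [h1, NetAux.dot_conj_self U hU1]
    refine Finset.sum_congr rfl fun i _ => ?_
    rw [← hcm, pow_two, hgg i]
  -- entries
  have hcment : ∀ i, cm i = u i ⬝ᵥ vv := by
    intro i
    simp [hcm, mulVec, dotProduct, Matrix.star_apply, u]
  have hMent : ∀ i, M i = u i ⬝ᵥ (S₀ *ᵥ u i) := by
    intro i
    simp only [hMdef, Matrix.mul_apply, mulVec, dotProduct, Matrix.star_apply, star_trivial,
      Finset.sum_mul, Finset.mul_sum]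
    rw [Finset.sum_comm]
    exact Finset.sum_congr rfl fun j _ => Finset.sum_congr rfl fun k _ => by ring
  have hM0 : ∀ i, 0 ≤ M i := by
    intro i
    rw [hMent i]
    have := hS₀.dotProduct_mulVec_nonneg (u i)
    simpa using this
  have hMle : ∀ i, M i ≤ lmax := by
    intro i
    have h := NetAux.quadform_le S₀ hS₀ lmax hlmax (u i)
    have h2 := horth i i
    rw [if_pos rfl] at h2
    rw [hMent i]
    calc u i ⬝ᵥ (S₀ *ᵥ u i) ≤ lmax * (u i ⬝ᵥ u i) := h
      _ = lmax := by rw [h2, mul_one]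
  have hlmax0 : 0 ≤ lmax := by
    obtain ⟨v, hvne, hv⟩ := hlmax_eig
    have h1 : 0 ≤ v ⬝ᵥ (S₀ *ᵥ v) := by have := hS₀.dotProduct_mulVec_nonneg v; simpa using this
    have h2 : v ⬝ᵥ (S₀ *ᵥ v) = lmax * (v ⬝ᵥ v) := by
      rw [hv, dotProduct_smul, smul_eq_mul]
    have h3 : 0 < v ⬝ᵥ v := by
      rcases (Finset.sum_nonneg fun i _ => mul_self_nonneg (v i)).lt_or_eq with h | h
      · exact h
      · exact absurd (dotProduct_self_eq_zero.mp h.symm) hvne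
    nlinarith
  set Q : ℝ := one ⬝ᵥ (S₀ *ᵥ one) with hQ
  have hMi₀ : M i₀ = c^2 * Q := by
    have hsm : (fun _ : Fin n => c) = c • one := by funext j; simp [hone]
    rw [hMent i₀, hc, hsm, mulVec_smul, smul_dotProduct, dotProduct_smul, smul_eq_mul,
      smul_eq_mul, ← mul_assoc, ← pow_two]
  have hcmi₀ : cm i₀ = c * ((∑ i, m₀ i) - n * μ₀) := by
    rw [hcment i₀, hc]
    have : (fun _ : Fin n => c) ⬝ᵥ vv = ∑ j, c * (m₀ j - μ₀) := by
      simp [dotProduct, hvv]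
    rw [this, ← Finset.mul_sum, Finset.sum_sub_distrib, Finset.sum_const, Finset.card_univ,
      Fintype.card_fin, nsmul_eq_mul]
  have hcm' : ∀ i, i ≠ i₀ → cm i = u i ⬝ᵥ m₀ := by
    intro i hi
    have h2 : vv = m₀ - μ₀ • one := by funext j; simp [hvv, hone]
    rw [hcment i, h2, dotProduct_sub, dotProduct_smul, ← hwent i, hw0' i hi]
    simp
  have hnorm_m : ∑ i, (u i ⬝ᵥ m₀)^2 = ∑ i, (m₀ i)^2 := by
    have h1 : ∀ i, (star U *ᵥ m₀) i = u i ⬝ᵥ m₀ := by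
      intro i
      simp [mulVec, dotProduct, Matrix.star_apply, u]
    have h2 := NetAux.dot_norm_preserve U hU2 m₀
    calc ∑ i, (u i ⬝ᵥ m₀)^2 = ∑ i, ((star U *ᵥ m₀) i)^2 :=
          Finset.sum_congr rfl fun i _ => by rw [h1 i]
      _ = m₀ ⬝ᵥ m₀ := h2
      _ = ∑ i, (m₀ i)^2 := by
          simp only [dotProduct]
          exact Finset.sum_congr rfl fun i _ => by ring
  -- final assembly
  set Gs : ℝ := Real.exp ((-(2*t)) * (lam + α)) with hGsdef
  set Ee : ℝ := Real.exp ((-(2*t)) * α) with hEedef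
  set K : ℝ := σ^2/2 * ((lam+α)⁻¹ * (1 - Gs)) with hKdef
  set Smm : ℝ := ∑ i, (m₀ i)^2 with hSmmdef
  set F : Fin n → ℝ :=
    fun i => G i * M i + σ^2/2 * ((d i + α)⁻¹ * (1 - G i)) + G i * cm i ^ 2 with hFdef
  have hlampos : 0 < lam + α := by linarith
  have hGs0 : 0 ≤ Gs := (Real.exp_pos _).le
  have hGs1 : Gs ≤ 1 := by
    rw [hGsdef]
    apply Real.exp_le_one_iff.mpr
    have h0 : 0 ≤ 2*t*(lam+α) := by positivity
    nlinarith
  have hEe0 : 0 ≤ Ee := (Real.exp_pos _).le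
  have hK0 : 0 ≤ K := by
    rw [hKdef]
    apply mul_nonneg (by positivity)
    apply mul_nonneg (inv_nonneg.mpr hlampos.le)
    linarith
  have hSmm0 : 0 ≤ Smm := Finset.sum_nonneg fun i _ => sq_nonneg _
  have hGle : ∀ i, i ≠ i₀ → G i ≤ Gs := by
    intro i hi
    rw [hG, hGsdef]
    apply Real.exp_le_exp.mpr
    have h := hdlam i hi
    nlinarith [mul_nonneg ht (sub_nonneg.mpr h)]
  have hLHSsum : (Sw t).trace + ∑ i, (μw t i - μ₀)^2 = ∑ i, F i := by
    rw [htrSw, hsumsq, ← Finset.sum_add_distrib]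
  have hsplit : ∑ i, F i = F i₀ + ∑ i ∈ Finset.univ.erase i₀, F i :=
    (Finset.add_sum_erase _ F (Finset.mem_univ i₀)).symm
  have hFb : ∀ i ∈ Finset.univ.erase i₀, F i ≤ Gs * lmax + Gs * (u i ⬝ᵥ m₀)^2 + K := by
    intro i hi
    have hi' : i ≠ i₀ := Finset.ne_of_mem_erase hi
    have h1 : G i * M i ≤ Gs * lmax := mul_le_mul (hGle i hi') (hMle i) (hM0 i) hGs0
    have h2 : G i * cm i ^ 2 ≤ Gs * (u i ⬝ᵥ m₀)^2 := by
      rw [hcm' i hi']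
      exact mul_le_mul_of_nonneg_right (hGle i hi') (sq_nonneg _)
    have h3 : σ^2/2 * ((d i + α)⁻¹ * (1 - G i)) ≤ K := by
      rw [hKdef]
      refine mul_le_mul_of_nonneg_left ?_ (by positivity)
      exact NetAux.inv_one_sub_exp_mono hlampos (by linarith [hdlam i hi']) ht
    simp only [hFdef]
    linarith
  have hsum_erase_le : ∑ i ∈ Finset.univ.erase i₀, F i
      ≤ (n:ℝ) * (Gs * lmax) + Gs * Smm + (n:ℝ) * K := by
    have hb := Finset.sum_le_sum hFb
    have hcard : ((Finset.univ.erase i₀).card : ℝ) ≤ (n:ℝ) := by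
      rw [Finset.card_erase_of_mem (Finset.mem_univ i₀), Finset.card_univ, Fintype.card_fin]
      exact_mod_cast Nat.sub_le n 1
    have hsplit2 : ∑ i ∈ Finset.univ.erase i₀, (Gs * lmax + Gs * (u i ⬝ᵥ m₀)^2 + K)
        = ((Finset.univ.erase i₀).card : ℝ) * (Gs * lmax)
          + Gs * (∑ i ∈ Finset.univ.erase i₀, (u i ⬝ᵥ m₀)^2)
          + ((Finset.univ.erase i₀).card : ℝ) * K := by
      rw [Finset.sum_add_distrib, Finset.sum_add_distrib, Finset.sum_const, Finset.sum_const,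
        ← Finset.mul_sum, nsmul_eq_mul, nsmul_eq_mul]
    have hsub2 : ∑ i ∈ Finset.univ.erase i₀, (u i ⬝ᵥ m₀)^2 ≤ Smm := by
      rw [← hnorm_m]
      exact Finset.sum_le_sum_of_subset_of_nonneg (Finset.subset_univ _)
        (fun i _ _ => sq_nonneg _)
    have h1 : ((Finset.univ.erase i₀).card : ℝ) * (Gs * lmax) ≤ (n:ℝ) * (Gs*lmax) :=
      mul_le_mul_of_nonneg_right hcard (by positivity)
    have h2 : Gs * (∑ i ∈ Finset.univ.erase i₀, (u i ⬝ᵥ m₀)^2) ≤ Gs * Smm :=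
      mul_le_mul_of_nonneg_left hsub2 hGs0
    have h3 : ((Finset.univ.erase i₀).card : ℝ) * K ≤ (n:ℝ) * K :=
      mul_le_mul_of_nonneg_right hcard hK0
    calc ∑ i ∈ Finset.univ.erase i₀, F i
        ≤ ∑ i ∈ Finset.univ.erase i₀, (Gs * lmax + Gs * (u i ⬝ᵥ m₀)^2 + K) := hb
      _ = _ := hsplit2
      _ ≤ (n:ℝ) * (Gs * lmax) + Gs * Smm + (n:ℝ) * K := by linarith
  have hGi₀ : G i₀ = Ee := by
    rw [hG, hEedef]
    simp only []
    congr 1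
    rw [hdi₀]
    ring
  have hFi₀ : F i₀ = Ee * (c^2*Q + (c * ((∑ i, m₀ i) - n*μ₀))^2)
      + σ^2/2 * (α⁻¹ * (1 - Ee)) := by
    simp only [hFdef]
    rw [hGi₀, hMi₀, hcmi₀, hdi₀, zero_add]
    ring
  have hcbeq : (1/(n:ℝ)) * F i₀ = Cb * Ee + σ^2/(2*α*(n:ℝ)) := by
    rw [hFi₀, hCb, mul_pow, hc2']
    field_simp
    ring
  have hfrac : σ^2/2 * (1/(lam+α) + 1/(α*(n:ℝ)))
      = σ^2/(2*(lam+α)) + σ^2/(2*α*(n:ℝ)) := by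
    field_simp
  have hKeq : K = σ^2/(2*(lam+α)) - σ^2/(2*(lam+α)) * Gs := by
    rw [hKdef]
    field_simp
  have hGs' : Real.exp (-2 * (lam+α) * t) = Gs := by
    rw [hGsdef]; congr 1; ring
  have hEe' : Real.exp (-2 * α * t) = Ee := by
    rw [hEedef]; congr 1; ring
  rw [hGs', hEe', hCt, hLHSsum, hsplit]
  have hmain : (1/(n:ℝ)) * (F i₀ + ∑ i ∈ Finset.univ.erase i₀, F i)
      ≤ Cb * Ee + σ^2/(2*α*(n:ℝ)) + Gs*lmax + (1/(n:ℝ)) * (Gs*Smm) + K := by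
    have h1 : (1/(n:ℝ)) * (∑ i ∈ Finset.univ.erase i₀, F i)
        ≤ (1/(n:ℝ)) * ((n:ℝ)*(Gs*lmax) + Gs*Smm + (n:ℝ)*K) :=
      mul_le_mul_of_nonneg_left hsum_erase_le (by positivity)
    have h2 : (1/(n:ℝ)) * ((n:ℝ)*(Gs*lmax) + Gs*Smm + (n:ℝ)*K)
        = Gs*lmax + (1/(n:ℝ))*(Gs*Smm) + K := by
      field_simp
    rw [mul_add, hcbeq]
    linarith
  have hlast : (1/(n:ℝ)) * (Gs*Smm) ≤ Gs*Smm := by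
    apply mul_le_of_le_one_left (by positivity)
    rw [div_le_one hnR]
    exact_mod_cast Nat.one_le_iff_ne_zero.mpr hnpos.ne'
  calc (1/(n:ℝ)) * (F i₀ + ∑ i ∈ Finset.univ.erase i₀, F i)
      ≤ Cb * Ee + σ^2/(2*α*(n:ℝ)) + Gs*lmax + (1/(n:ℝ)) * (Gs*Smm) + K := hmain
    _ ≤ (lmax - σ^2/(2*(lam+α)) + Smm) * Gs + Cb * Ee
        + σ^2/2 * (1/(lam+α) + 1/(α*(n:ℝ))) := by
      rw [hfrac]
      have hexpand : (lmax - σ^2/(2*(lam+α)) + Smm) * Gs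
          = lmax*Gs - σ^2/(2*(lam+α))*Gs + Smm*Gs := by ring
      have hcomm1 : Gs*lmax = lmax*Gs := mul_comm _ _
      have hcomm2 : Gs*Smm = Smm*Gs := mul_comm _ _
      linarith [hKeq, hlast, hexpand, hcomm1, hcomm2]
end

section
/- Let N ≥ 1, let Q be a symmetric positive-definite N×N real matrix, and let S be a symmetric positive-semidefinite N×N real matrix. Then the matrix-valued function s ↦ exp(−Qs)·S·exp(−Qs) is integrable on [0, ∞), the matrix C := ∫₀^∞ exp(−Qs)·S·exp(−Qs) ds satisfies the Lyapunov equation Q·C + C·Q = S, and 2·trace(C) ≤ λ_max(S)·trace(Q^{-1}). -/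
open Matrix MeasureTheory

lemma ou_aux_integrableOn {a : ℝ} (ha : 0 < a) (c : ℝ) :
    IntegrableOn (fun s : ℝ => c * Real.exp (-(a * s))) (Set.Ici 0) := by
  rw [integrableOn_Ici_iff_integrableOn_Ioi]
  have h := exp_neg_integrableOn_Ioi 0 ha
  simp only [neg_mul] at h
  exact h.const_mul c

lemma ou_aux_integral {a : ℝ} (ha : 0 < a) :
    ∫ s in Set.Ici (0:ℝ), Real.exp (-(a * s)) = a⁻¹ := by
  rw [MeasureTheory.integral_Ici_eq_integral_Ioi]
  have h := integral_comp_mul_left_Ioi (fun x => Real.exp (-x)) 0 ha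
  simp only [mul_zero, Real.exp_zero, smul_eq_mul] at h
  rw [h, integral_exp_neg_Ioi, neg_zero, Real.exp_zero, mul_one]

/-- The stationary covariance of an Ornstein–Uhlenbeck process: for `Q` symmetric positive
definite and `S` symmetric positive semidefinite, `s ↦ exp(−Qs)·S·exp(−Qs)` is integrable on
`[0,∞)`, its integral `C` solves the Lyapunov equation `QC + CQ = S`, and
`2·trace(C) ≤ λ_max(S)·trace(Q⁻¹)`. -/
theorem ou_stationary_covariance_trace_bound
    (N : ℕ) (hN : 1 ≤ N) (Q S : Matrix (Fin N) (Fin N) ℝ)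
    (hQ : Q.PosDef) (hS : S.PosSemidef)
    (lmax : ℝ) (hlmax_eig : ∃ v : Fin N → ℝ, v ≠ 0 ∧ S *ᵥ v = lmax • v)
    (hlmax : ∀ (c : ℝ) (v : Fin N → ℝ), v ≠ 0 → S *ᵥ v = c • v → c ≤ lmax)
    (C : Matrix (Fin N) (Fin N) ℝ)
    (hC : C = Matrix.of fun i j => ∫ s in Set.Ici (0 : ℝ),
        (NormedSpace.exp ((-s) • Q) * S * NormedSpace.exp ((-s) • Q)) i j) :
    (∀ i j, IntegrableOn
        (fun s : ℝ => (NormedSpace.exp ((-s) • Q) * S * NormedSpace.exp ((-s) • Q)) i j)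
        (Set.Ici 0)) ∧
    Q * C + C * Q = S ∧
    2 * C.trace ≤ lmax * (Q⁻¹).trace := by
  classical
  have hQH : Q.IsHermitian := hQ.1
  have hSH : S.IsHermitian := hS.1
  set V : Matrix (Fin N) (Fin N) ℝ := (hQH.eigenvectorUnitary : Matrix (Fin N) (Fin N) ℝ) with hVdef
  set d : Fin N → ℝ := hQH.eigenvalues with hddef
  have hdpos : ∀ k, 0 < d k := hQ.eigenvalues_pos
  have hVsV : star V * V = 1 := Unitary.coe_star_mul_self _
  have hVVs : V * star V = 1 := Unitary.coe_mul_star_self _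
  have hVunit : IsUnit V := isUnit_iff_exists.2 ⟨star V, hVVs, hVsV⟩
  have hVinv : V⁻¹ = star V := Matrix.inv_eq_left_inv hVsV
  have hQspec : Q = V * Matrix.diagonal d * star V := by
    have := hQH.spectral_theorem
    simpa [RCLike.ofReal_real_eq_id] using this
  set M : Matrix (Fin N) (Fin N) ℝ := star V * S * V with hMdef
  have key : ∀ A B : Matrix (Fin N) (Fin N) ℝ,
      (V * A * star V) * (V * B * star V) = V * (A * B) * star V := by
    intro A B
    calc (V * A * star V) * (V * B * star V)
        = V * A * ((star V * V) * (B * star V)) := by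
          simp only [Matrix.mul_assoc]
      _ = V * (A * B) * star V := by
          rw [hVsV, Matrix.one_mul, ← Matrix.mul_assoc, Matrix.mul_assoc V A B]
  have hS' : S = V * M * star V := by
    rw [hMdef]
    simp only [← Matrix.mul_assoc]
    rw [hVVs, Matrix.one_mul, Matrix.mul_assoc, hVVs, Matrix.mul_one]
  -- exponential formula
  have hexp : ∀ s : ℝ, NormedSpace.exp ((-s) • Q)
      = V * Matrix.diagonal (fun k => Real.exp (-(s * d k))) * star V := by
    intro s
    have h1 : (-s) • Q = V * Matrix.diagonal (fun k => -(s * d k)) * V⁻¹ := by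
      rw [hVinv, hQspec, ← smul_mul_assoc, ← mul_smul_comm]
      have hsd : (-s) • d = fun k => -(s * d k) := by
        funext k; simp [smul_eq_mul]
      rw [← Matrix.diagonal_smul, hsd]
    rw [h1, Matrix.exp_conj V _ hVunit, Matrix.exp_diagonal, hVinv]
    congr 2
    funext k
    rw [Pi.exp_def]
    simp [← Real.exp_eq_exp_ℝ]
  have hprod : ∀ s : ℝ, NormedSpace.exp ((-s) • Q) * S * NormedSpace.exp ((-s) • Q)
      = V * (Matrix.diagonal (fun k => Real.exp (-(s * d k))) * M
          * Matrix.diagonal (fun k => Real.exp (-(s * d k)))) * star V := by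
    intro s
    rw [hexp s]
    conv_lhs => rw [hS']
    rw [key, key]
  -- entrywise formula for conjugation
  have h2 : ∀ (B : Matrix (Fin N) (Fin N) ℝ) i j,
      (V * B * star V) i j = ∑ k, ∑ l, V i k * B k l * V j l := by
    intro B i j
    rw [Matrix.mul_apply]
    simp_rw [Matrix.mul_apply, Finset.sum_mul]
    rw [Finset.sum_comm]
    refine Finset.sum_congr rfl fun k _ => Finset.sum_congr rfl fun l _ => ?_
    simp [Matrix.star_apply]
  have hentry : ∀ (s : ℝ) i j,
      (NormedSpace.exp ((-s) • Q) * S * NormedSpace.exp ((-s) • Q)) i j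
        = ∑ k, ∑ l, (V i k * M k l * V j l) * Real.exp (-((d k + d l) * s)) := by
    intro s i j
    rw [hprod s, h2]
    refine Finset.sum_congr rfl fun k _ => Finset.sum_congr rfl fun l _ => ?_
    simp only [Matrix.mul_diagonal, Matrix.diagonal_mul]
    have he : Real.exp (-(s * d k)) * Real.exp (-(s * d l))
        = Real.exp (-((d k + d l) * s)) := by
      rw [← Real.exp_add]
      congr 1
      ring
    linear_combination (V i k * M k l * V j l) * he
  -- integrability
  have hint : ∀ i j, IntegrableOn
      (fun s : ℝ => (NormedSpace.exp ((-s) • Q) * S * NormedSpace.exp ((-s) • Q)) i j)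
      (Set.Ici 0) := by
    intro i j
    have hfe : (fun s : ℝ => (NormedSpace.exp ((-s) • Q) * S * NormedSpace.exp ((-s) • Q)) i j)
        = fun s => ∑ k, ∑ l, (V i k * M k l * V j l) * Real.exp (-((d k + d l) * s)) :=
      funext fun s => hentry s i j
    rw [hfe]
    refine integrable_finset_sum _ fun k _ => integrable_finset_sum _ fun l _ => ?_
    exact ou_aux_integrableOn (add_pos (hdpos k) (hdpos l)) _
  -- entries of C
  have hCentry : ∀ i j, C i j = ∑ k, ∑ l, (V i k * M k l * V j l) * (d k + d l)⁻¹ := by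
    intro i j
    rw [hC, Matrix.of_apply]
    calc (∫ s in Set.Ici (0:ℝ),
            (NormedSpace.exp ((-s) • Q) * S * NormedSpace.exp ((-s) • Q)) i j)
        = ∫ s in Set.Ici (0:ℝ),
            ∑ k, ∑ l, (V i k * M k l * V j l) * Real.exp (-((d k + d l) * s)) := by
          exact MeasureTheory.integral_congr_ae
            (Filter.Eventually.of_forall fun s => hentry s i j)
      _ = ∑ k, ∑ l, (V i k * M k l * V j l) * (d k + d l)⁻¹ := by
          rw [MeasureTheory.integral_finset_sum _ (fun k _ =>
            integrable_finset_sum _ fun l _ =>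
              ou_aux_integrableOn (add_pos (hdpos k) (hdpos l)) _)]
          refine Finset.sum_congr rfl fun k _ => ?_
          rw [MeasureTheory.integral_finset_sum _ (fun l _ =>
            ou_aux_integrableOn (add_pos (hdpos k) (hdpos l)) _)]
          refine Finset.sum_congr rfl fun l _ => ?_
          rw [MeasureTheory.integral_const_mul, ou_aux_integral (add_pos (hdpos k) (hdpos l))]
  set T : Matrix (Fin N) (Fin N) ℝ := Matrix.of (fun k l => M k l * (d k + d l)⁻¹) with hTdef
  have hCform : C = V * T * star V := by
    ext i j
    rw [hCentry i j, h2]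
    refine Finset.sum_congr rfl fun k _ => Finset.sum_congr rfl fun l _ => ?_
    simp only [hTdef, Matrix.of_apply]
    ring
  -- Lyapunov equation
  have hlyap : Q * C + C * Q = S := by
    rw [hQspec, hCform, key, key, ← Matrix.add_mul, ← Matrix.mul_add]
    have hTT : Matrix.diagonal d * T + T * Matrix.diagonal d = M := by
      ext k l
      simp only [Matrix.add_apply, Matrix.diagonal_mul, Matrix.mul_diagonal, hTdef,
        Matrix.of_apply]
      have h0 : d k + d l ≠ 0 := (add_pos (hdpos k) (hdpos l)).ne'
      field_simp
    rw [hTT, ← hS']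
  -- trace of C
  have htrC : C.trace = ∑ k, M k k * (2 * d k)⁻¹ := by
    rw [hCform, Matrix.trace_mul_cycle, hVsV, Matrix.one_mul, Matrix.trace]
    refine Finset.sum_congr rfl fun k _ => ?_
    simp only [Matrix.diag_apply, hTdef, Matrix.of_apply, two_mul]
  -- inverse of Q
  have hQinv : Q⁻¹ = V * Matrix.diagonal (fun k => (d k)⁻¹) * star V := by
    apply Matrix.inv_eq_right_inv
    rw [hQspec, key, Matrix.diagonal_mul_diagonal]
    have h1 : (fun i => d i * (d i)⁻¹) = fun _ : Fin N => (1:ℝ) :=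
      funext fun k => mul_inv_cancel₀ (hdpos k).ne'
    rw [h1, show Matrix.diagonal (fun _ : Fin N => (1:ℝ)) = 1 from Matrix.diagonal_one,
      Matrix.mul_one, hVVs]
  have htrQinv : (Q⁻¹).trace = ∑ k, (d k)⁻¹ := by
    rw [hQinv, Matrix.trace_mul_cycle, hVsV, Matrix.one_mul]
    simp [Matrix.trace, Matrix.diag]
  -- quadratic form bound
  have hquad : ∀ v : Fin N → ℝ, v ⬝ᵥ (S *ᵥ v) ≤ lmax * (v ⬝ᵥ v) := by
    intro v
    set W : Matrix (Fin N) (Fin N) ℝ := (hSH.eigenvectorUnitary : Matrix (Fin N) (Fin N) ℝ)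
      with hWdef
    set μ : Fin N → ℝ := hSH.eigenvalues with hmudef
    have hWsW : star W * W = 1 := Unitary.coe_star_mul_self _
    have hWWs : W * star W = 1 := Unitary.coe_mul_star_self _
    have hSspec : S = W * Matrix.diagonal μ * star W := by
      have := hSH.spectral_theorem
      simpa [RCLike.ofReal_real_eq_id] using this
    have hmule : ∀ i, μ i ≤ lmax := by
      intro i
      refine hlmax (μ i) (hSH.eigenvectorBasis i) ?_ ?_
      · intro h
        exact hSH.eigenvectorBasis.orthonormal.ne_zero i (by ext x; exact congrFun h x)
      · simpa using hSH.mulVec_eigenvectorBasis i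
    set w : Fin N → ℝ := star W *ᵥ v with hwdef
    have hv : W *ᵥ w = v := by
      rw [hwdef, Matrix.mulVec_mulVec, hWWs, Matrix.one_mulVec]
    have hSv : S *ᵥ v = W *ᵥ (Matrix.diagonal μ *ᵥ w) := by
      rw [hSspec, hwdef]
      simp [← Matrix.mulVec_mulVec, Matrix.mul_assoc]
    have hiso : ∀ a b : Fin N → ℝ, (W *ᵥ a) ⬝ᵥ (W *ᵥ b) = a ⬝ᵥ b := by
      intro a b
      rw [Matrix.dotProduct_mulVec, ← Matrix.mulVec_transpose,
        Matrix.mulVec_mulVec, ← Matrix.conjTranspose_eq_transpose_of_trivial,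
        show Wᴴ = star W from rfl, hWsW, Matrix.one_mulVec]
    have h1 : v ⬝ᵥ (S *ᵥ v) = w ⬝ᵥ (Matrix.diagonal μ *ᵥ w) := by
      rw [hSv, ← hv]
      exact hiso w (Matrix.diagonal μ *ᵥ w)
    have h2' : v ⬝ᵥ v = w ⬝ᵥ w := by
      rw [← hv]
      exact hiso w w
    rw [h1, h2', dotProduct, dotProduct, Finset.mul_sum]
    refine Finset.sum_le_sum fun i _ => ?_
    rw [Matrix.mulVec_diagonal]
    nlinarith [mul_le_mul_of_nonneg_right (hmule i) (mul_self_nonneg (w i))]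
  -- diagonal entries of M are bounded by lmax
  have hMle : ∀ k, M k k ≤ lmax := by
    intro k
    have hcol : M k k = (fun l => V l k) ⬝ᵥ (S *ᵥ (fun l => V l k)) := by
      rw [hMdef]
      simp only [Matrix.mul_apply, dotProduct, Matrix.mulVec, Matrix.star_apply,
        star_trivial, Finset.sum_mul, Finset.mul_sum]
      rw [Finset.sum_comm]
      exact Finset.sum_congr rfl fun l _ => Finset.sum_congr rfl fun m _ => by ring
    have hnorm : (fun l => V l k) ⬝ᵥ (fun l : Fin N => V l k) = 1 := by
      have h := congrFun (congrFun hVsV k) k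
      simp only [Matrix.mul_apply, Matrix.star_apply, star_trivial, Matrix.one_apply_eq] at h
      simpa [dotProduct] using h
    calc M k k = (fun l => V l k) ⬝ᵥ (S *ᵥ (fun l => V l k)) := hcol
      _ ≤ lmax * ((fun l => V l k) ⬝ᵥ (fun l : Fin N => V l k)) := hquad _
      _ = lmax := by rw [hnorm, mul_one]
  refine ⟨hint, hlyap, ?_⟩
  rw [htrC, htrQinv, Finset.mul_sum, Finset.mul_sum]
  refine Finset.sum_le_sum fun k _ => ?_
  have hdk : d k ≠ 0 := (hdpos k).ne'
  have heq : 2 * (M k k * (2 * d k)⁻¹) = M k k * (d k)⁻¹ := by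
    field_simp
  rw [heq]
  exact mul_le_mul_of_nonneg_right (hMle k) (inv_nonneg.2 (hdpos k).le)
end

section
/- Let U be a p×q real matrix with trivial kernel (full column rank, so UᵀU is positive definite), and let U_h be a q×r real matrix with trivial kernel (full column rank). Then the symmetric (q+r)×(q+r) block matrix [[UᵀU + I_q, −U_h], [−U_hᵀ, U_hᵀU_h]] is positive definite. -/
open Matrix

lemma dp_sq_nonneg {n : ℕ} (v : Fin n → ℝ) : 0 ≤ v ⬝ᵥ v :=
  Finset.sum_nonneg fun i _ => mul_self_nonneg _

/-- The symmetrized negated drift of the two-layer linear predictive-coding (Rao–Ballard)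
dynamics at trade-off parameter `λ = 1` is positive definite whenever the two dictionaries
`U` and `U_h` have full column rank: the block matrix
`[[UᵀU + I, −U_h], [−U_hᵀ, U_hᵀU_h]]` is positive definite. -/
theorem rao_ballard_drift_posDef
    (p q r : ℕ) (U : Matrix (Fin p) (Fin q) ℝ) (Uh : Matrix (Fin q) (Fin r) ℝ)
    (hU : ∀ v : Fin q → ℝ, U *ᵥ v = 0 → v = 0)
    (hUh : ∀ v : Fin r → ℝ, Uh *ᵥ v = 0 → v = 0) :
    (Matrix.fromBlocks (Uᵀ * U + 1) (-Uh) (-Uhᵀ) (Uhᵀ * Uh)).PosDef := by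
  rw [posDef_iff_dotProduct_mulVec]
  constructor
  · unfold Matrix.IsHermitian
    simp [Matrix.conjTranspose_eq_transpose_of_trivial, fromBlocks_transpose,
      transpose_add, transpose_mul, transpose_transpose, Matrix.fromBlocks_inj]
  · intro x hx
    set a : Fin q → ℝ := x ∘ Sum.inl with ha
    set b : Fin r → ℝ := x ∘ Sum.inr with hb
    have hxe : x = Sum.elim a b := by ext (i|i) <;> rfl
    rw [hxe]
    rw [fromBlocks_mulVec]
    simp only [Sum.elim_comp_inl, Sum.elim_comp_inr, star_trivial]
    rw [sumElim_dotProduct_sumElim]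
    have key : a ⬝ᵥ ((Uᵀ * U + 1) *ᵥ a + (-Uh) *ᵥ b) + b ⬝ᵥ ((-Uhᵀ) *ᵥ a + (Uhᵀ * Uh) *ᵥ b)
        = (U *ᵥ a) ⬝ᵥ (U *ᵥ a) + (a - Uh *ᵥ b) ⬝ᵥ (a - Uh *ᵥ b) := by
      have e1 : a ⬝ᵥ (Uᵀ * U) *ᵥ a = (U *ᵥ a) ⬝ᵥ (U *ᵥ a) := by
        rw [← Matrix.mulVec_mulVec, dotProduct_mulVec, vecMul_transpose]
      have e2 : b ⬝ᵥ (Uhᵀ * Uh) *ᵥ b = (Uh *ᵥ b) ⬝ᵥ (Uh *ᵥ b) := by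
        rw [← Matrix.mulVec_mulVec, dotProduct_mulVec, vecMul_transpose]
      have e3 : b ⬝ᵥ Uhᵀ *ᵥ a = (Uh *ᵥ b) ⬝ᵥ a := by
        rw [dotProduct_mulVec, vecMul_transpose]
      have e4 : a ⬝ᵥ (Uh *ᵥ b) = (Uh *ᵥ b) ⬝ᵥ a := dotProduct_comm _ _
      simp only [Matrix.add_mulVec, Matrix.neg_mulVec, dotProduct_add, dotProduct_neg,
        dotProduct_sub, sub_dotProduct, Matrix.one_mulVec, e1, e2, e3, e4]
      ring
    rw [key]
    have hb0 : 0 ≤ (a - Uh *ᵥ b) ⬝ᵥ (a - Uh *ᵥ b) := dp_sq_nonneg _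
    have ha0 : 0 ≤ (U *ᵥ a) ⬝ᵥ (U *ᵥ a) := dp_sq_nonneg _
    rcases eq_or_ne a 0 with h | h
    · have hbne : b ≠ 0 := by
        intro hb0'
        apply hx; rw [hxe, h, hb0']; ext (i|i) <;> rfl
      have : Uh *ᵥ b ≠ 0 := fun hc => hbne (hUh b hc)
      have : a - Uh *ᵥ b ≠ 0 := by simp [h, this]
      have := lt_of_le_of_ne hb0 (Ne.symm fun hc => this (dotProduct_self_eq_zero.mp hc))
      positivity
    · have : U *ᵥ a ≠ 0 := fun hc => h (hU a hc)
      have := lt_of_le_of_ne ha0 (Ne.symm fun hc => this (dotProduct_self_eq_zero.mp hc))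
      positivity
end

section
/- Let m ≥ 1, x, y ∈ ℝ^m, w ∈ ℝ, σ_N > 0, σ_Z > 0 and η > 0. Let L_z be a symmetric positive-semidefinite m×m real matrix, let Z be a centered multivariate Gaussian random vector on ℝ^m with covariance σ_Z²·(L_z + ηI)^{-1}, and let N be a real-valued centered Gaussian random variable with variance σ_N², independent of Z. Then E[ N²·(x + Z)ᵀ( (x + Z)·(2w + N) − 2y ) ] = 2σ_N²·( (‖x‖² + σ_Z²·trace((L_z + ηI)^{-1}))·w − ⟨x, y⟩ ). -/
open Matrix MeasureTheory ProbabilityTheory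

/-- `μ` is a centered multivariate Gaussian measure on `ℝ^m` with covariance matrix `S`. -/
def IsCenteredGaussianVec {m : ℕ} (μ : Measure (Fin m → ℝ))
    (S : Matrix (Fin m) (Fin m) ℝ) : Prop :=
  IsProbabilityMeasure μ ∧
    ∀ v : Fin m → ℝ,
      μ.map (fun z => ∑ i, v i * z i) = gaussianReal 0 (Real.toNNReal (v ⬝ᵥ (S *ᵥ v)))

section GaussianMomentAux

open Real Filter
open scoped NNReal ENNReal

private lemma odd_integral_zero' {f : ℝ → ℝ} (h : ∀ x, f (-x) = -f x) : ∫ x, f x = 0 := by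
  have h1 : ∫ x, f (-x) = ∫ x, f x := integral_neg_eq_self f volume
  have h2 : ∫ x, f (-x) = - ∫ x, f x := by
    simp_rw [h]; exact integral_neg f
  linarith

private lemma integrable_pow_mul_exp' (b : ℝ) (hb : 0 < b) (k : ℕ) :
    Integrable (fun x : ℝ => x ^ k * rexp (-b * x ^ 2)) := by
  have h := integrable_rpow_mul_exp_neg_mul_sq hb (s := (k : ℝ))
    (lt_of_lt_of_le (by norm_num) (Nat.cast_nonneg k))
  have : (fun x : ℝ => x ^ (k : ℝ) * rexp (-b * x ^ 2))
      = fun x : ℝ => x ^ k * rexp (-b * x ^ 2) := by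
    funext x; rw [Real.rpow_natCast]
  rwa [this] at h

private lemma tendsto_mul_exp_top' (b : ℝ) (hb : 0 < b) :
    Tendsto (fun x : ℝ => x * rexp (-b * x ^ 2)) atTop (nhds 0) := by
  have h := rpow_mul_exp_neg_mul_sq_isLittleO_exp_neg hb 1
  have h2 : Tendsto (fun x : ℝ => rexp (-(1/2) * x)) atTop (nhds 0) := by
    apply Real.tendsto_exp_atBot.comp
    exact Tendsto.const_mul_atTop_of_neg (by norm_num) tendsto_id
  have h3 := h.trans_tendsto h2
  have : (fun x : ℝ => x ^ (1:ℝ) * rexp (-b * x ^ 2))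
      = fun x : ℝ => x * rexp (-b * x ^ 2) := by
    funext x; rw [Real.rpow_one]
  rwa [this] at h3

private lemma integral_sq_mul_exp' (b : ℝ) (hb : 0 < b) :
    ∫ x : ℝ, x ^ 2 * rexp (-b * x ^ 2) = Real.sqrt (π / b) / (2 * b) := by
  set f : ℝ → ℝ := fun x => x * rexp (-b * x ^ 2) with hf
  set g : ℝ → ℝ := fun x => rexp (-b * x ^ 2) - 2 * b * (x ^ 2 * rexp (-b * x ^ 2)) with hg
  have hderiv : ∀ x : ℝ, HasDerivAt f (g x) x := by
    intro x
    have h1 : HasDerivAt (fun x : ℝ => -b * x ^ 2) (-b * (2 * x)) x := by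
      simpa using (hasDerivAt_pow 2 x).const_mul (-b)
    have h2 := h1.exp
    have h3 := (hasDerivAt_id x).mul h2
    convert (show HasDerivAt f
      (1 * rexp (-b * x ^ 2) + x * (rexp (-b * x ^ 2) * (-b * (2 * x)))) x from h3) using 1
    show rexp (-b * x ^ 2) - 2 * b * (x ^ 2 * rexp (-b * x ^ 2))
      = 1 * rexp (-b * x ^ 2) + x * (rexp (-b * x ^ 2) * (-b * (2 * x)))
    ring
  have hgInt : Integrable g := by
    exact (integrable_exp_neg_mul_sq hb).sub
      ((integrable_pow_mul_exp' b hb 2).const_mul (2 * b))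
  have htop : Tendsto f atTop (nhds 0) := tendsto_mul_exp_top' b hb
  have hbot : Tendsto f atBot (nhds 0) := by
    have hodd : ∀ x, f (-x) = -f x := by intro x; simp [f]
    have h1 : Tendsto (fun x => f (-x)) atTop (nhds 0) := by
      simp_rw [hodd]; simpa using htop.neg
    exact (h1.comp tendsto_neg_atBot_atTop).congr (fun x => by simp [Function.comp])
  have hIoi : ∫ x in Set.Ioi (0:ℝ), g x = 0 - f 0 :=
    integral_Ioi_of_hasDerivAt_of_tendsto' (fun x _ => hderiv x) hgInt.integrableOn htop
  have hIic : ∫ x in Set.Iic (0:ℝ), g x = f 0 - 0 :=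
    integral_Iic_of_hasDerivAt_of_tendsto' (fun x _ => hderiv x) hgInt.integrableOn hbot
  have htot : ∫ x : ℝ, g x = 0 := by
    rw [← intervalIntegral.integral_Iic_add_Ioi (b := (0:ℝ)) hgInt.integrableOn
      hgInt.integrableOn, hIoi, hIic]
    ring
  have hsplit : ∫ x : ℝ, g x
      = (∫ x : ℝ, rexp (-b * x ^ 2)) - 2 * b * ∫ x : ℝ, x ^ 2 * rexp (-b * x ^ 2) := by
    rw [hg]
    rw [integral_sub (integrable_exp_neg_mul_sq hb)
      ((integrable_pow_mul_exp' b hb 2).const_mul (2 * b)), integral_const_mul]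
  rw [hsplit, integral_gaussian] at htot
  field_simp at htot ⊢
  linarith

private lemma gaussianPDFReal_eq' (v : ℝ≥0) (hv : v ≠ 0) :
    gaussianPDFReal 0 v = fun x => (Real.sqrt (2 * π * v))⁻¹ * rexp (-(2 * (v:ℝ))⁻¹ * x ^ 2) := by
  funext x
  have hv' : (0:ℝ) < v := by positivity
  rw [gaussianPDFReal]
  congr 1
  rw [sub_zero]
  field_simp

private lemma integral_fun_gaussianReal' (v : ℝ≥0) (hv : v ≠ 0) (g : ℝ → ℝ) :
    ∫ x, g x ∂(gaussianReal 0 v) = ∫ x, gaussianPDFReal 0 v x * g x := by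
  rw [gaussianReal_of_var_ne_zero 0 hv]
  have hmeas : Measurable (fun x => (gaussianPDFReal 0 v x).toNNReal) :=
    (measurable_gaussianPDFReal 0 v).real_toNNReal
  have : gaussianPDF 0 v = fun x => ((gaussianPDFReal 0 v x).toNNReal : ℝ≥0∞) := rfl
  rw [this, integral_withDensity_eq_integral_smul hmeas]
  congr 1
  funext x
  rw [NNReal.smul_def, smul_eq_mul, Real.coe_toNNReal _ (gaussianPDFReal_nonneg 0 v x)]

private lemma integrable_pow_gaussianReal' (v : ℝ≥0) (k : ℕ) :
    Integrable (fun x : ℝ => x ^ k) (gaussianReal 0 v) := by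
  by_cases hv : v = 0
  · subst hv
    rw [gaussianReal_zero_var]
    exact (integrable_const ((0:ℝ) ^ k)).congr (ae_eq_dirac _).symm
  · have hv' : (0:ℝ) < v := by positivity
    have hb : (0:ℝ) < (2 * (v:ℝ))⁻¹ := by positivity
    rw [gaussianReal_of_var_ne_zero 0 hv,
      integrable_withDensity_iff (measurable_gaussianPDF 0 v)
        (Filter.Eventually.of_forall fun x => ENNReal.ofReal_lt_top)]
    have heq : (fun x : ℝ => x ^ k * (gaussianPDF 0 v x).toReal)
        = fun x : ℝ => (Real.sqrt (2 * π * v))⁻¹ *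
            (x ^ k * rexp (-(2 * (v:ℝ))⁻¹ * x ^ 2)) := by
      funext x
      rw [gaussianPDF_def, ENNReal.toReal_ofReal (gaussianPDFReal_nonneg 0 v x),
        gaussianPDFReal_eq' v hv]
      ring
    rw [heq]
    exact (integrable_pow_mul_exp' _ hb k).const_mul _

private lemma integral_id_gaussianReal' (v : ℝ≥0) : ∫ x, x ∂(gaussianReal 0 v) = 0 := by
  by_cases hv : v = 0
  · subst hv; rw [gaussianReal_zero_var]; simp [integral_dirac]
  · rw [integral_fun_gaussianReal' v hv, gaussianPDFReal_eq' v hv]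
    apply odd_integral_zero'
    intro x
    simp only [neg_sq]
    ring

private lemma integral_cube_gaussianReal' (v : ℝ≥0) :
    ∫ x, x ^ 3 ∂(gaussianReal 0 v) = 0 := by
  by_cases hv : v = 0
  · subst hv; rw [gaussianReal_zero_var]; simp [integral_dirac]
  · rw [integral_fun_gaussianReal' v hv, gaussianPDFReal_eq' v hv]
    apply odd_integral_zero'
    intro x
    simp only [neg_sq, Odd.neg_pow (by decide : Odd 3)]
    ring

private lemma integral_sq_gaussianReal' (v : ℝ≥0) :
    ∫ x, x ^ 2 ∂(gaussianReal 0 v) = (v : ℝ) := by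
  by_cases hv : v = 0
  · subst hv; rw [gaussianReal_zero_var]; simp [integral_dirac]
  · have hv' : (0:ℝ) < v := by positivity
    have hb : (0:ℝ) < (2 * (v:ℝ))⁻¹ := by positivity
    rw [integral_fun_gaussianReal' v hv, gaussianPDFReal_eq' v hv]
    have heq : (fun x : ℝ => (Real.sqrt (2 * π * v))⁻¹ *
          rexp (-(2 * (v:ℝ))⁻¹ * x ^ 2) * x ^ 2)
        = fun x : ℝ => (Real.sqrt (2 * π * v))⁻¹ *
          (x ^ 2 * rexp (-(2 * (v:ℝ))⁻¹ * x ^ 2)) := by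
      funext x; ring
    rw [heq, integral_const_mul, integral_sq_mul_exp' _ hb]
    have hπ : π / (2 * (v:ℝ))⁻¹ = 2 * π * v := by
      field_simp
    have h2 : (2:ℝ) * (2 * (v:ℝ))⁻¹ = ((v:ℝ))⁻¹ := by
      field_simp
    rw [hπ, h2]
    have hs : (0:ℝ) < Real.sqrt (2 * π * v) := Real.sqrt_pos.mpr (by positivity)
    rw [div_inv_eq_mul, ← mul_assoc, inv_mul_cancel₀ hs.ne']
    ring

end GaussianMomentAux

/-- Homogenized drift of the coordinatewise PSGD regression dynamics: averaging
`N²·(x+Z)ᵀ((x+Z)(2w+N) − 2y)` over the independent pair of a scalar Gaussian PSGD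
perturbation `N ∼ N(0, σ_N²)` and a correlated Gaussian data-noise vector
`Z ∼ N(0, σ_Z²(L_z+ηI)⁻¹)` gives
`2σ_N²((‖x‖² + σ_Z²·trace((L_z+ηI)⁻¹))·w − ⟨x,y⟩)`. -/
theorem psgd_regression_averaged_drift
    (m : ℕ) (hm : 1 ≤ m) (x y : Fin m → ℝ) (w σN σZ η : ℝ)
    (hσN : 0 < σN) (hσZ : 0 < σZ) (hη : 0 < η)
    (Lz : Matrix (Fin m) (Fin m) ℝ) (hLzsym : Lz.IsSymm) (hLz : Lz.PosSemidef)
    (μZ : Measure (Fin m → ℝ))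
    (hG : IsCenteredGaussianVec μZ (σZ ^ 2 • (Lz + η • 1)⁻¹)) :
    (∫ p : ℝ × (Fin m → ℝ),
        p.1 ^ 2 * (∑ i, (x i + p.2 i) * ((x i + p.2 i) * (2 * w + p.1) - 2 * y i))
        ∂((gaussianReal 0 (Real.toNNReal (σN ^ 2))).prod μZ))
      = 2 * σN ^ 2 * (((∑ i, x i ^ 2) + σZ ^ 2 * ((Lz + η • 1)⁻¹).trace) * w
          - ∑ i, x i * y i) := by
  haveI hPZ : IsProbabilityMeasure μZ := hG.1
  set ν : Measure ℝ := gaussianReal 0 (Real.toNNReal (σN ^ 2)) with hν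
  set M : Matrix (Fin m) (Fin m) ℝ := (Lz + η • 1)⁻¹ with hMdef
  -- M is positive semidefinite
  have hMpsd : M.PosSemidef := by
    apply Matrix.PosSemidef.inv
    constructor
    · exact hLz.1.add (by
        rw [Matrix.smul_one_eq_diagonal]
        exact (Matrix.PosSemidef.diagonal (fun i => hη.le)).1)
    · intro v
      have h1 := hLz.2 v
      have h2 := (Matrix.PosSemidef.diagonal (R := ℝ) (n := Fin m)
        (d := fun _ => η) (fun i => hη.le)).2 v
      rw [Matrix.smul_one_eq_diagonal]
      simp only [Matrix.add_apply, mul_add, add_mul, Finsupp.sum_add]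
      exact add_nonneg h1 h2
  have hdiag : ∀ i, 0 ≤ M i i := by
    intro i
    have h := hMpsd.2 (Finsupp.single i 1)
    simpa [Finsupp.sum_single_index] using h
  -- coordinate marginals
  have hmap : ∀ i, μZ.map (fun z => z i)
      = gaussianReal 0 (Real.toNNReal (σZ ^ 2 * M i i)) := by
    intro i
    have h := hG.2 (Pi.single i 1)
    have h1 : (fun z : Fin m → ℝ => ∑ j, (Pi.single i 1 : Fin m → ℝ) j * z j)
        = fun z => z i := by
      funext z
      simp [Pi.single_apply]
    have h2 : (Pi.single i 1 : Fin m → ℝ) ⬝ᵥ ((σZ ^ 2 • M) *ᵥ (Pi.single i 1 : Fin m → ℝ))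
        = σZ ^ 2 * M i i := by
      simp [Matrix.mulVec, dotProduct, Pi.single_apply, Matrix.smul_apply]
    rw [h1, h2] at h
    exact h
  have hmeasφ : ∀ i, Measurable (fun z : Fin m → ℝ => z i) :=
    fun i => measurable_pi_apply i
  have hZint : ∀ (i) (k : ℕ), Integrable (fun z : Fin m → ℝ => (z i) ^ k) μZ := by
    intro i k
    have h : Integrable (fun a : ℝ => a ^ k) (μZ.map (fun z => z i)) := by
      rw [hmap i]; exact integrable_pow_gaussianReal' _ k
    exact (integrable_map_measure ((measurable_id.pow_const k).aestronglyMeasurable) (hmeasφ i).aemeasurable).mp h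
  have hZlin : ∀ i, Integrable (fun z : Fin m → ℝ => z i) μZ := by
    intro i
    simpa using hZint i 1
  have hZval : ∀ (i) (k : ℕ), ∫ z, (z i) ^ k ∂μZ
      = ∫ a, a ^ k ∂(gaussianReal 0 (Real.toNNReal (σZ ^ 2 * M i i))) := by
    intro i k
    rw [← hmap i]
    exact (integral_map (f := fun a : ℝ => a ^ k) (hmeasφ i).aemeasurable
      ((continuous_pow k).measurable.aestronglyMeasurable)).symm
  have hZ1 : ∀ i, ∫ z, z i ∂μZ = 0 := by
    intro i
    have := hZval i 1
    simpa [integral_id_gaussianReal'] using this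
  have hZ2 : ∀ i, ∫ z, (z i) ^ 2 ∂μZ = σZ ^ 2 * M i i := by
    intro i
    rw [hZval i 2, integral_sq_gaussianReal',
      Real.coe_toNNReal _ (mul_nonneg (by positivity) (hdiag i))]
  -- the two Z-functionals
  set A : (Fin m → ℝ) → ℝ := fun z => ∑ i, (x i + z i) ^ 2 with hAdef
  set B : (Fin m → ℝ) → ℝ := fun z => ∑ i, (x i + z i) * y i with hBdef
  have hAexp : A = fun z => ∑ i, (x i ^ 2 + 2 * x i * z i + z i ^ 2) := by
    funext z
    exact Finset.sum_congr rfl fun i _ => by ring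
  have hBexp : B = fun z => ∑ i, (x i * y i + y i * z i) := by
    funext z
    exact Finset.sum_congr rfl fun i _ => by ring
  have hAint : Integrable A μZ := by
    rw [hAexp]
    apply integrable_finset_sum
    intro i _
    refine Integrable.add (Integrable.add (integrable_const _) ?_) (hZint i 2)
    exact (hZlin i).const_mul (2 * x i)
  have hBint : Integrable B μZ := by
    rw [hBexp]
    apply integrable_finset_sum
    intro i _
    refine Integrable.add (integrable_const _) ?_
    exact (hZlin i).const_mul (y i)
  have hAval : ∫ z, A z ∂μZ = (∑ i, x i ^ 2) + σZ ^ 2 * M.trace := by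
    have hint1 : ∀ i : Fin m, Integrable (fun z : Fin m → ℝ => x i ^ 2 + 2 * x i * z i) μZ :=
      fun i => (integrable_const (x i ^ 2)).add ((hZlin i).const_mul (2 * x i))
    have hint2 : ∀ i : Fin m,
        Integrable (fun z : Fin m → ℝ => x i ^ 2 + 2 * x i * z i + z i ^ 2) μZ :=
      fun i => (hint1 i).add (hZint i 2)
    rw [hAexp, integral_finset_sum _ (fun i _ => hint2 i)]
    have hterm : ∀ i, ∫ z, (x i ^ 2 + 2 * x i * z i + z i ^ 2) ∂μZ
        = x i ^ 2 + σZ ^ 2 * M i i := by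
      intro i
      rw [integral_add (hint1 i) (hZint i 2),
        integral_add (integrable_const (x i ^ 2)) ((hZlin i).const_mul (2 * x i)),
        integral_const_mul, hZ1 i, hZ2 i, integral_const]
      simp
    simp_rw [hterm]
    rw [Finset.sum_add_distrib, ← Finset.mul_sum]
    congr 1
  have hBval : ∫ z, B z ∂μZ = ∑ i, x i * y i := by
    have hint1 : ∀ i : Fin m, Integrable (fun z : Fin m → ℝ => x i * y i + y i * z i) μZ :=
      fun i => (integrable_const (x i * y i)).add ((hZlin i).const_mul (y i))
    rw [hBexp, integral_finset_sum _ (fun i _ => hint1 i)]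
    have hterm : ∀ i, ∫ z, (x i * y i + y i * z i) ∂μZ = x i * y i := by
      intro i
      rw [integral_add (integrable_const (x i * y i)) ((hZlin i).const_mul (y i)),
        integral_const, integral_const_mul, hZ1 i]
      simp
    simp_rw [hterm]
  -- ν moments
  have hν2 : ∫ a, a ^ 2 ∂ν = σN ^ 2 := by
    rw [hν, integral_sq_gaussianReal', Real.coe_toNNReal _ (by positivity)]
  have hν3 : ∫ a, a ^ 3 ∂ν = 0 := by
    rw [hν, integral_cube_gaussianReal']
  set f1 : ℝ → ℝ := fun a => (2 * w) * a ^ 2 with hf1def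
  set f2 : ℝ → ℝ := fun a => a ^ 3 with hf2def
  set f3 : ℝ → ℝ := fun a => 2 * a ^ 2 with hf3def
  have hf1int : Integrable f1 ν := (integrable_pow_gaussianReal' _ 2).const_mul _
  have hf2int : Integrable f2 ν := integrable_pow_gaussianReal' _ 3
  have hf3int : Integrable f3 ν := (integrable_pow_gaussianReal' _ 2).const_mul _
  have hrw : (fun p : ℝ × (Fin m → ℝ) =>
      p.1 ^ 2 * (∑ i, (x i + p.2 i) * ((x i + p.2 i) * (2 * w + p.1) - 2 * y i)))
      = fun p => f1 p.1 * A p.2 + f2 p.1 * A p.2 - f3 p.1 * B p.2 := by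
    funext p
    have hsum : ∑ i, (x i + p.2 i) * ((x i + p.2 i) * (2 * w + p.1) - 2 * y i)
        = (2 * w + p.1) * A p.2 - 2 * B p.2 := by
      rw [hAdef, hBdef, Finset.mul_sum, Finset.mul_sum, ← Finset.sum_sub_distrib]
      exact Finset.sum_congr rfl fun i _ => by ring
    rw [hsum, hf1def, hf2def, hf3def]
    ring
  have HA1 : Integrable (fun p : ℝ × (Fin m → ℝ) => f1 p.1 * A p.2) (ν.prod μZ) :=
    hf1int.mul_prod hAint
  have HA2 : Integrable (fun p : ℝ × (Fin m → ℝ) => f2 p.1 * A p.2) (ν.prod μZ) :=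
    hf2int.mul_prod hAint
  have HB3 : Integrable (fun p : ℝ × (Fin m → ℝ) => f3 p.1 * B p.2) (ν.prod μZ) :=
    hf3int.mul_prod hBint
  have HA12 : Integrable (fun p : ℝ × (Fin m → ℝ) => f1 p.1 * A p.2 + f2 p.1 * A p.2)
      (ν.prod μZ) := HA1.add HA2
  rw [hrw, integral_sub HA12 HB3, integral_add HA1 HA2,
    integral_prod_mul f1 A, integral_prod_mul f2 A, integral_prod_mul f3 B]
  have e1 : ∫ a, f1 a ∂ν = 2 * w * σN ^ 2 := by
    rw [hf1def]; rw [integral_const_mul, hν2]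
  have e2 : ∫ a, f2 a ∂ν = 0 := hν3
  have e3 : ∫ a, f3 a ∂ν = 2 * σN ^ 2 := by
    rw [hf3def]; rw [integral_const_mul, hν2]
  rw [e1, e2, e3, hAval, hBval]
  ring
end

section
/- Let a ∈ ℝ, σ_N > 0 and σ_w > 0. Define Φ : ℝ² → ℝ by Φ(y, z) = z − a·σ_N²·y − (a/6)·y³, and define the differential operator L₀ acting on smooth functions of (y, z) by (L₀φ)(y,z) = −y·∂φ/∂y − z·∂φ/∂z + σ_N²·∂²φ/∂y² + σ_w²·∂²φ/∂z². Then: (i) for all (y, z) ∈ ℝ², −(L₀Φ)(y, z) = z − (a/2)·y³; and (ii) ∫ Φ(y, z) dp_∞(y, z) = 0, where p_∞ is the product of the Gaussian measure on ℝ with mean 0 and variance σ_N² (in y) and the Gaussian measure on ℝ with mean 0 and variance σ_w² (in z). -/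
open MeasureTheory ProbabilityTheory

lemma gaussianReal_map_neg' (v : NNReal) :
    (gaussianReal 0 v).map (fun x : ℝ => -x) = gaussianReal 0 v := by
  have h := gaussianReal_map_const_mul (μ := 0) (v := v) (-1)
  simp only [neg_one_mul, mul_zero] at h
  rw [h]
  congr 1
  ext
  norm_num

/-- `Φ(y,z) = z − aσ_N²y − (a/6)y³` is the centered solution of the Poisson cell problem
`−L₀Φ = z − (a/2)y³` for the generator `L₀` of the two-dimensional Ornstein–Uhlenbeck process
with stationary distribution `N(0, σ_N²) ⊗ N(0, σ_w²)`: (i) `−(L₀Φ)(y,z) = z − (a/2)y³`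
pointwise, and (ii) `∫ Φ dp_∞ = 0`. -/
theorem poisson_cell_problem_solution
    (a σN σw : ℝ) (hσN : 0 < σN) (hσw : 0 < σw)
    (Φ : ℝ → ℝ → ℝ) (hΦ : ∀ y z : ℝ, Φ y z = z - a * σN ^ 2 * y - a / 6 * y ^ 3)
    (L0 : (ℝ → ℝ → ℝ) → ℝ → ℝ → ℝ)
    (hL0 : ∀ (φ : ℝ → ℝ → ℝ) (y z : ℝ), L0 φ y z
        = -y * deriv (fun y' => φ y' z) y - z * deriv (fun z' => φ y z') z
          + σN ^ 2 * deriv (fun y' => deriv (fun y'' => φ y'' z) y') y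
          + σw ^ 2 * deriv (fun z' => deriv (fun z'' => φ y z'') z') z) :
    (∀ y z : ℝ, -(L0 Φ y z) = z - a / 2 * y ^ 3) ∧
    (∫ p : ℝ × ℝ, Φ p.1 p.2
        ∂((gaussianReal 0 (Real.toNNReal (σN ^ 2))).prod
          (gaussianReal 0 (Real.toNNReal (σw ^ 2))))) = 0 := by
  have hdy : ∀ z y : ℝ, deriv (fun y' => Φ y' z) y
      = -(a * σN ^ 2) - a / 2 * y ^ 2 := by
    intro z y
    have : (fun y' => Φ y' z) = fun y' => z - a * σN ^ 2 * y' - a / 6 * y' ^ 3 := by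
      funext y'; exact hΦ y' z
    rw [this]
    have h : HasDerivAt (fun y' : ℝ => z - a * σN ^ 2 * y' - a / 6 * y' ^ 3)
        (0 - a * σN ^ 2 * 1 - a / 6 * (3 * y ^ 2)) y := by
      exact (((hasDerivAt_const y z).sub ((hasDerivAt_id y).const_mul
        (a * σN ^ 2))).sub (((hasDerivAt_pow 3 y)).const_mul (a / 6)))
    rw [h.deriv]; ring
  have hdz : ∀ y z : ℝ, deriv (fun z' => Φ y z') z = 1 := by
    intro y z
    have : (fun z' => Φ y z') = fun z' => z' - (a * σN ^ 2 * y + a / 6 * y ^ 3) := by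
      funext z'; rw [hΦ]; ring
    rw [this, deriv_sub_const, deriv_id'']
  constructor
  · intro y z
    rw [hL0, hdy, hdz]
    have h2y : deriv (fun y' => deriv (fun y'' => Φ y'' z) y') y = -(a * y) := by
      have : (fun y' => deriv (fun y'' => Φ y'' z) y')
          = fun y' => -(a * σN ^ 2) - a / 2 * y' ^ 2 := by
        funext y'; exact hdy z y'
      rw [this]
      have h : HasDerivAt (fun y' : ℝ => -(a * σN ^ 2) - a / 2 * y' ^ 2)
          (0 - a / 2 * (2 * y ^ 1)) y :=
        (hasDerivAt_const y _).sub ((hasDerivAt_pow 2 y).const_mul (a / 2))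
      rw [h.deriv]; ring
    have h2z : deriv (fun z' => deriv (fun z'' => Φ y z'') z') z = 0 := by
      have : (fun z' => deriv (fun z'' => Φ y z'') z') = fun _ : ℝ => (1 : ℝ) := by
        funext z'; exact hdz y z'
      rw [this, deriv_const]
    rw [h2y, h2z]; ring
  · set μ₁ := gaussianReal 0 (Real.toNNReal (σN ^ 2))
    set μ₂ := gaussianReal 0 (Real.toNNReal (σw ^ 2))
    have hmap : (μ₁.prod μ₂).map (fun p : ℝ × ℝ => (-p.1, -p.2)) = μ₁.prod μ₂ := by
      have := Measure.map_prod_map (f := fun x : ℝ => -x) (g := fun x : ℝ => -x)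
        μ₁ μ₂ measurable_neg measurable_neg
      rw [show (fun p : ℝ × ℝ => (-p.1, -p.2)) = Prod.map (fun x : ℝ => -x) (fun x : ℝ => -x) from rfl,
        ← this, gaussianReal_map_neg', gaussianReal_map_neg']
    have hmeas : Measurable fun p : ℝ × ℝ => Φ p.1 p.2 := by
      have : (fun p : ℝ × ℝ => Φ p.1 p.2)
          = fun p : ℝ × ℝ => p.2 - a * σN ^ 2 * p.1 - a / 6 * p.1 ^ 3 := by
        funext p; exact hΦ p.1 p.2
      rw [this]; fun_prop
    have key : (∫ p : ℝ × ℝ, Φ p.1 p.2 ∂(μ₁.prod μ₂))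
        = -∫ p : ℝ × ℝ, Φ p.1 p.2 ∂(μ₁.prod μ₂) := by
      conv_lhs => rw [← hmap]
      rw [integral_map (by fun_prop) hmeas.aestronglyMeasurable]
      have : ∀ p : ℝ × ℝ, Φ (-p.1) (-p.2) = -Φ p.1 p.2 := by
        intro p; rw [hΦ, hΦ]; ring
      simp only [this, integral_neg]
    linarith
end

section
/- Let m ≥ 1 and n ≥ 1, let x, y ∈ ℝ^m with x ≠ 0, let γ > 0, and set α := ‖x‖² + m·γ² and μ := (⟨x, y⟩/α)·1 ∈ ℝ^n. Let L be a symmetric positive-semidefinite n×n real matrix and m₀ ∈ ℝ^n. Then: (i) exp(−(L+αI)t)·m₀ + (I − exp(−(L+αI)t))·μ converges to μ as t → ∞; and (ii) each coordinate of μ equals ⟨x, y⟩/(‖x‖² + m·γ²), which is the unique global minimizer over w ∈ ℝ of the regularized objective w ↦ ‖y − w·x‖² + m·γ²·w². -/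
open Matrix Filter
open scoped RealInnerProductSpace

/-- Each entry of `exp((-t)•A)` tends to `0` for a positive definite real matrix `A`. -/
lemma exp_neg_smul_entry_tendsto_zero {n : ℕ} (A : Matrix (Fin n) (Fin n) ℝ)
    (hA : A.PosDef) (i j : Fin n) :
    Tendsto (fun t : ℝ => (NormedSpace.exp ((-t) • A)) i j) atTop (nhds 0) := by
  classical
  set U : Matrix (Fin n) (Fin n) ℝ := (hA.1.eigenvectorUnitary : Matrix (Fin n) (Fin n) ℝ)
    with hU
  have hUmem : U ∈ Matrix.unitaryGroup (Fin n) ℝ := (hA.1.eigenvectorUnitary).2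
  have hUU : U * star U = 1 := (Matrix.mem_unitaryGroup_iff).mp hUmem
  have hUnit : IsUnit U := ⟨Unitary.toUnits hA.1.eigenvectorUnitary, rfl⟩
  have hUinv : U⁻¹ = star U := Matrix.inv_eq_right_inv hUU
  set lam : Fin n → ℝ := hA.1.eigenvalues with hlam
  have hspec : A = U * Matrix.diagonal (RCLike.ofReal ∘ lam) * star U := by
    have := hA.1.spectral_theorem; rwa [Unitary.conjStarAlgAut_apply] at this
  have hofReal : (RCLike.ofReal ∘ lam : Fin n → ℝ) = lam := by
    funext k; simp [RCLike.ofReal]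
  rw [hofReal] at hspec
  have hexp : ∀ t : ℝ,
      NormedSpace.exp ((-t) • A)
        = U * Matrix.diagonal (fun k => Real.exp (-t * lam k)) * star U := by
    intro t
    have hd : Matrix.diagonal (fun k => -t * lam k)
        = (-t) • Matrix.diagonal lam := by
      ext a b
      by_cases hab : a = b <;> simp [Matrix.diagonal, hab]
    have h1 : (-t) • A = U * Matrix.diagonal (fun k => -t * lam k) * U⁻¹ := by
      rw [hspec, hUinv, hd, Matrix.mul_smul, Matrix.smul_mul]
    rw [h1, Matrix.exp_conj U _ hUnit, Matrix.exp_diagonal, hUinv]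
    rw [Pi.exp_def]
    congr 2
    funext k b
    by_cases hkb : k = b
    · subst hkb
      simp only [Matrix.diagonal_apply_eq]
      rw [Real.exp_eq_exp_ℝ]
    · simp [Matrix.diagonal_apply_ne _ hkb]
  have hentry : ∀ t : ℝ,
      (NormedSpace.exp ((-t) • A)) i j
        = ∑ k, U i k * Real.exp (-t * lam k) * (star U) k j := by
    intro t
    rw [hexp t, Matrix.mul_apply]
    refine Finset.sum_congr rfl fun k _ => ?_
    rw [Matrix.mul_diagonal]
  simp only [hentry]
  have h0 : (0 : ℝ) = ∑ k : Fin n, 0 := by simp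
  rw [h0]
  refine tendsto_finset_sum _ fun k _ => ?_
  have hk : 0 < lam k := hA.eigenvalues_pos k
  have hexpk : Tendsto (fun t : ℝ => Real.exp (-t * lam k)) atTop (nhds 0) := by
    have hcomp : Tendsto (fun t : ℝ => lam k * t) atTop atTop :=
      Tendsto.const_mul_atTop hk tendsto_id
    have := Real.tendsto_exp_neg_atTop_nhds_zero.comp hcomp
    refine this.congr fun t => ?_
    simp [Function.comp]; ring_nf
  have : Tendsto (fun t : ℝ => U i k * Real.exp (-t * lam k) * (star U) k j) atTop
      (nhds (U i k * 0 * (star U) k j)) := by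
    exact (hexpk.const_mul _).mul_const _
  simpa using this

/-- The paper's central claim: the mean of the network of `n` coupled noisy gradient-descent
learning systems, after homogenizing over observational noise of variance `γ²`, converges as
`t → ∞` (in every node) to `μ = (⟨x,y⟩/α)·1` with `α = ‖x‖² + mγ²`; each coordinate of `μ`
equals `⟨x,y⟩/(‖x‖² + mγ²)`, the unique global minimizer of the Tikhonov-regularized
objective `w ↦ ‖y − w·x‖² + mγ²·w²`. -/
theorem network_mean_converges_to_regularized_solution
    (m n : ℕ) (hm : 1 ≤ m) (hn : 1 ≤ n)
    (x y : EuclideanSpace ℝ (Fin m)) (hx : x ≠ 0) (γ : ℝ) (hγ : 0 < γ)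
    (α : ℝ) (hα : α = ‖x‖ ^ 2 + m * γ ^ 2)
    (μ : Fin n → ℝ) (hμ : μ = fun _ => ⟪x, y⟫ / α)
    (L : Matrix (Fin n) (Fin n) ℝ) (hLsym : L.IsSymm) (hL : L.PosSemidef)
    (m₀ : Fin n → ℝ) :
    Tendsto (fun t : ℝ => NormedSpace.exp ((-t) • (L + α • 1)) *ᵥ m₀
        + (1 - NormedSpace.exp ((-t) • (L + α • 1))) *ᵥ μ) atTop (nhds μ) ∧
    ∀ i, μ i = ⟪x, y⟫ / (‖x‖ ^ 2 + m * γ ^ 2) ∧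
      ∀ w : ℝ, w ≠ μ i →
        ‖y - (μ i) • x‖ ^ 2 + m * γ ^ 2 * (μ i) ^ 2
          < ‖y - w • x‖ ^ 2 + m * γ ^ 2 * w ^ 2 := by
  classical
  have hxpos : (0 : ℝ) < ‖x‖ := norm_pos_iff.mpr hx
  have hmpos : (0 : ℝ) < (m : ℝ) := by exact_mod_cast hm
  have hαpos : 0 < α := by
    rw [hα]
    positivity
  -- positive definiteness of L + α•1
  have hA : (L + α • (1 : Matrix (Fin n) (Fin n) ℝ)).PosDef := by
    refine Matrix.PosDef.posSemidef_add hL ?_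
    have : α • (1 : Matrix (Fin n) (Fin n) ℝ) = Matrix.diagonal (fun _ => α) := by
      rw [Matrix.smul_one_eq_diagonal]
    rw [this]
    exact Matrix.PosDef.diagonal fun _ => hαpos
  constructor
  · -- convergence
    have hrw : ∀ t : ℝ,
        NormedSpace.exp ((-t) • (L + α • 1)) *ᵥ m₀
            + (1 - NormedSpace.exp ((-t) • (L + α • 1))) *ᵥ μ
          = μ + NormedSpace.exp ((-t) • (L + α • 1)) *ᵥ (m₀ - μ) := by
      intro t
      rw [Matrix.sub_mulVec, Matrix.one_mulVec, Matrix.mulVec_sub]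
      abel
    simp only [hrw]
    have hzero : Tendsto
        (fun t : ℝ => NormedSpace.exp ((-t) • (L + α • 1)) *ᵥ (m₀ - μ)) atTop (nhds 0) := by
      rw [tendsto_pi_nhds]
      intro i
      have h0 : (0 : Fin n → ℝ) i = ∑ j : Fin n, 0 := by simp
      rw [h0]
      refine tendsto_finset_sum _ fun j _ => ?_
      have := (exp_neg_smul_entry_tendsto_zero (L + α • 1) hA i j).mul_const ((m₀ - μ) j)
      simpa using this
    have := tendsto_const_nhds (x := μ) (f := (atTop : Filter ℝ)) |>.add hzero
    simpa using this
  · intro i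
    have hμi : μ i = ⟪x, y⟫ / α := by rw [hμ]
    refine ⟨by rw [hμi, hα], ?_⟩
    intro w hw
    have hkey : ∀ v : ℝ, ‖y - v • x‖ ^ 2 + m * γ ^ 2 * v ^ 2
        = ‖y‖ ^ 2 - 2 * v * ⟪x, y⟫ + α * v ^ 2 := by
      intro v
      have h1 : ‖y - v • x‖ ^ 2 = ‖y‖ ^ 2 - 2 * ⟪y, v • x⟫ + ‖v • x‖ ^ 2 := by
        rw [norm_sub_sq_real]
      have h2 : ⟪y, v • x⟫ = v * ⟪x, y⟫ := by
        rw [real_inner_smul_right, real_inner_comm]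
      have h3 : ‖v • x‖ ^ 2 = v ^ 2 * ‖x‖ ^ 2 := by
        rw [norm_smul]
        simp [mul_pow, sq_abs]
      rw [h1, h2, h3, hα]
      ring
    rw [hkey, hkey]
    have hμα : α * μ i = ⟪x, y⟫ := by
      rw [hμi]
      field_simp
    have hdiff : (‖y‖ ^ 2 - 2 * w * ⟪x, y⟫ + α * w ^ 2)
        - (‖y‖ ^ 2 - 2 * μ i * ⟪x, y⟫ + α * (μ i) ^ 2) = α * (w - μ i) ^ 2 := by
      have : ⟪x, y⟫ = α * μ i := hμα.symm
      rw [this]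
      ring
    have hpos : 0 < α * (w - μ i) ^ 2 := by
      have : w - μ i ≠ 0 := sub_ne_zero.mpr hw
      positivity
    linarith [hdiff, hpos]
end
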